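/- arXiv:hep-th/0402147 — 3 statements merged into one kernel-verified Lean document; each statement's English description precedes it below -/
import Mathlib

section
/- For Schwartz functions f, g on ℝⁿ and any real skew-symmetric n×n matrix Θ, the integral of the Moyal product equals the integral of the pointwise product: ∫ (f ⋆_Θ g)(x) dx = ∫ f(x) g(x) dx. -/
open MeasureTheory Complex

section MoyalAux

open FourierTransform Real SchwartzMap

variable {n : ℕ}

/-- Fourier-type transform with convention `∫ e^{-i ξ·y} f y dy`. -/
noncomputable def Fneg (n : ℕ) (f : (Fin n → ℝ) → ℂ) (ξ : Fin n → ℝ) : ℂ :=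
  ∫ y : Fin n → ℝ, Complex.exp (-(Complex.I * ∑ i, (ξ i : ℂ) * (y i : ℂ))) * f y

/-- Fourier-type transform with convention `∫ e^{i ξ·y} f y dy`. -/
noncomputable def Fpos (n : ℕ) (f : (Fin n → ℝ) → ℂ) (ξ : Fin n → ℝ) : ℂ :=
  ∫ y : Fin n → ℝ, Complex.exp (Complex.I * ∑ i, (ξ i : ℂ) * (y i : ℂ)) * f y

lemma Fpos_eq_Fneg_neg (f : (Fin n → ℝ) → ℂ) (ξ : Fin n → ℝ) :
    Fpos n f ξ = Fneg n f (-ξ) := by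
  unfold Fpos Fneg
  congr 1
  ext y
  congr 2
  simp only [Pi.neg_apply, Complex.ofReal_neg, neg_mul, Finset.sum_neg_distrib, mul_neg,
    neg_neg]

lemma skew_sum {Θ : Matrix (Fin n) (Fin n) ℝ} (hΘ : Θ.transpose = -Θ) (ξ : Fin n → ℝ) :
    ∑ i, ξ i * Θ.mulVec ξ i = 0 := by
  have h : ∀ i j, Θ j i = -Θ i j := by
    intro i j
    have := congrFun (congrFun hΘ i) j
    simpa [Matrix.transpose_apply] using this
  have S0 : (∑ i, ξ i * Θ.mulVec ξ i) = ∑ i, ∑ j, ξ i * (Θ i j * ξ j) := by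
    simp [Matrix.mulVec, dotProduct, Finset.mul_sum]
  have key : (∑ i, ∑ j, ξ i * (Θ i j * ξ j)) = -∑ i, ∑ j, ξ i * (Θ i j * ξ j) := by
    nth_rewrite 1 [Finset.sum_comm]
    rw [← Finset.sum_neg_distrib]
    refine Finset.sum_congr rfl fun i _ => ?_
    rw [← Finset.sum_neg_distrib]
    refine Finset.sum_congr rfl fun j _ => ?_
    rw [h i j]
    ring
  rw [S0]
  linarith [key]

/-- Continuity of the phase pairing. -/
lemma continuous_phase :
    Continuous (fun p : (Fin n → ℝ) × (Fin n → ℝ) => ∑ i, (p.1 i : ℂ) * (p.2 i : ℂ)) := by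
  apply continuous_finset_sum
  intro i _
  fun_prop

lemma norm_exp_phase (s : ℝ) : ‖Complex.exp (-(Complex.I * (s : ℂ)))‖ = 1 := by
  simp [Complex.norm_exp]

lemma sum_coe_eq (ξ y : Fin n → ℝ) :
    (∑ i, (ξ i : ℂ) * (y i : ℂ)) = ((∑ i, ξ i * y i : ℝ) : ℂ) := by
  push_cast
  rfl

lemma norm_exp_phase' (ξ y : Fin n → ℝ) :
    ‖Complex.exp (-(Complex.I * ∑ i, (ξ i : ℂ) * (y i : ℂ)))‖ = 1 := by
  rw [sum_coe_eq, norm_exp_phase]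

lemma norm_exp_phase_pos (ξ y : Fin n → ℝ) :
    ‖Complex.exp (Complex.I * ∑ i, (ξ i : ℂ) * (y i : ℂ))‖ = 1 := by
  rw [sum_coe_eq]
  simp [Complex.norm_exp]

lemma continuous_Fneg (f : SchwartzMap (Fin n → ℝ) ℂ) : Continuous (Fneg n (fun y => f y)) := by
  unfold Fneg
  refine continuous_of_dominated (bound := fun y => ‖f y‖) ?_ ?_ ?_ ?_
  · intro ξ
    refine Continuous.aestronglyMeasurable ?_
    exact (Complex.continuous_exp.comp
      ((continuous_const.mul ((continuous_phase (n := n)).comp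
        (continuous_const.prodMk continuous_id))).neg)).mul f.continuous
  · intro ξ
    filter_upwards with y
    rw [norm_mul, norm_exp_phase', one_mul]
  · exact f.integrable.norm
  · filter_upwards with y
    exact (Complex.continuous_exp.comp
      ((continuous_const.mul ((continuous_phase (n := n)).comp
        (continuous_id.prodMk continuous_const))).neg)).mul continuous_const

/-- Transfer a Schwartz function on the pi type to Euclidean space. -/
noncomputable def toE (f : SchwartzMap (Fin n → ℝ) ℂ) :
    SchwartzMap (EuclideanSpace ℝ (Fin n)) ℂ :=
  SchwartzMap.compCLMOfAntilipschitz ℝ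
    ((EuclideanSpace.equiv (Fin n) ℝ).toContinuousLinearMap.hasTemperateGrowth)
    (EuclideanSpace.equiv (Fin n) ℝ).antilipschitz f

lemma mequiv_apply (x : EuclideanSpace ℝ (Fin n)) (i : Fin n) :
    (MeasurableEquiv.toLp 2 (Fin n → ℝ)).symm x i = x i := rfl

lemma toE_apply (f : SchwartzMap (Fin n → ℝ) ℂ) (v : EuclideanSpace ℝ (Fin n)) :
    toE f v = f ((MeasurableEquiv.toLp 2 (Fin n → ℝ)).symm v) := rfl

lemma integral_pi_eq (φ : (Fin n → ℝ) → ℂ) :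
    ∫ x : Fin n → ℝ, φ x
      = ∫ x : EuclideanSpace ℝ (Fin n), φ ((MeasurableEquiv.toLp 2 (Fin n → ℝ)).symm x) :=
  ((EuclideanSpace.volume_preserving_symm_measurableEquiv_toLp (Fin n)).integral_comp
    (MeasurableEquiv.toLp 2 (Fin n → ℝ)).symm.measurableEmbedding φ).symm

lemma integrable_pi_iff (φ : (Fin n → ℝ) → ℂ) :
    Integrable φ (volume : Measure (Fin n → ℝ)) ↔
      Integrable (fun x : EuclideanSpace ℝ (Fin n) =>
        φ ((MeasurableEquiv.toLp 2 (Fin n → ℝ)).symm x)) volume :=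
  ((EuclideanSpace.volume_preserving_symm_measurableEquiv_toLp (Fin n)).integrable_comp_emb
    (MeasurableEquiv.toLp 2 (Fin n → ℝ)).symm.measurableEmbedding).symm

lemma inner_eq_sum (v w : EuclideanSpace ℝ (Fin n)) :
    (inner ℝ v w : ℝ) = ∑ i, v i * w i := by
  simp [PiLp.inner_apply, RCLike.inner_apply, conj_trivial]
  exact Finset.sum_congr rfl fun i _ => mul_comm _ _

lemma integrable_fourier_toE (f : SchwartzMap (Fin n → ℝ) ℂ) :
    Integrable (𝓕 (fun v => toE f v)) volume := by
  have : 𝓕 (fun v => toE f v)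
      = fun v => SchwartzMap.fourierTransformCLM ℝ (toE f) v := by
    rfl
  rw [this]
  exact (SchwartzMap.fourierTransformCLM ℝ (toE f)).integrable

lemma fneg_eq (f : SchwartzMap (Fin n → ℝ) ℂ) (ξ : EuclideanSpace ℝ (Fin n)) :
    Fneg n (fun y => f y) ((MeasurableEquiv.toLp 2 (Fin n → ℝ)).symm ξ)
      = 𝓕 (fun v => toE f v) ((2 * Real.pi)⁻¹ • ξ) := by
  rw [Real.fourier_eq']
  unfold Fneg
  rw [integral_pi_eq]
  refine integral_congr_ae (Filter.Eventually.of_forall fun v => ?_)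
  beta_reduce
  have h1 : (inner ℝ v ((2 * Real.pi)⁻¹ • ξ) : ℝ) = (2 * Real.pi)⁻¹ * ∑ i, v i * ξ i := by
    rw [real_inner_smul_right, inner_eq_sum]
  rw [h1, smul_eq_mul, ← toE_apply]
  congr 1
  simp only [mequiv_apply, sum_coe_eq]
  have h2π : (2 * Real.pi) ≠ 0 := by
    have := Real.pi_ne_zero; positivity
  have : -2 * Real.pi * ((2 * Real.pi)⁻¹ * ∑ i, v i * ξ i) = -∑ i, v i * ξ i := by
    field_simp
  rw [this]
  push_cast
  congr 1
  rw [neg_mul, neg_inj, mul_comm]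
  congr 1
  refine Finset.sum_congr rfl fun i _ => by ring

lemma integrable_Fneg (f : SchwartzMap (Fin n → ℝ) ℂ) :
    Integrable (Fneg n (fun y => f y)) := by
  rw [integrable_pi_iff]
  have heq : (fun x : EuclideanSpace ℝ (Fin n) =>
      Fneg n (fun y => f y) ((MeasurableEquiv.toLp 2 (Fin n → ℝ)).symm x))
      = fun x : EuclideanSpace ℝ (Fin n) =>
        𝓕 (fun v => toE f v) ((2 * Real.pi)⁻¹ • x) := by
    funext x
    exact fneg_eq f x
  rw [heq]
  have h2π : ((2 : ℝ) * Real.pi)⁻¹ ≠ 0 := by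
    have := Real.pi_ne_zero
    positivity
  exact (integrable_fourier_toE f).comp_smul h2π

lemma inversion (f : SchwartzMap (Fin n → ℝ) ℂ) (x : Fin n → ℝ) :
    (((2 * Real.pi) ^ n : ℝ) : ℂ)⁻¹ *
      ∫ ξ : Fin n → ℝ, Complex.exp (Complex.I * ∑ i, (ξ i : ℂ) * (x i : ℂ)) *
        Fneg n (fun y => f y) ξ = f x := by
  have h2π : (2 * Real.pi) ≠ 0 := by have := Real.pi_ne_zero; positivity
  set xE : EuclideanSpace ℝ (Fin n) := (MeasurableEquiv.toLp 2 (Fin n → ℝ)).symm.symm x with hxE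
  have hx : (MeasurableEquiv.toLp 2 (Fin n → ℝ)).symm xE = x :=
    (MeasurableEquiv.toLp 2 (Fin n → ℝ)).symm.apply_symm_apply x
  have hxi : ∀ i, xE i = x i := fun i => rfl
  set G : EuclideanSpace ℝ (Fin n) → ℂ := fun w =>
    Complex.exp ((2 * Real.pi * (inner ℝ w xE : ℝ) : ℝ) * Complex.I) *
      𝓕 (fun v => toE f v) w with hG
  rw [integral_pi_eq]
  have key : ∀ ξ : EuclideanSpace ℝ (Fin n),
      Complex.exp (Complex.I *
          ∑ i, (((MeasurableEquiv.toLp 2 (Fin n → ℝ)).symm ξ i : ℝ) : ℂ) * (x i : ℂ)) *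
        Fneg n (fun y => f y) ((MeasurableEquiv.toLp 2 (Fin n → ℝ)).symm ξ)
      = G ((2 * Real.pi)⁻¹ • ξ) := by
    intro ξ
    rw [fneg_eq, hG]
    congr 1
    have h1 : (inner ℝ ((2 * Real.pi)⁻¹ • ξ) xE : ℝ) = (2 * Real.pi)⁻¹ * ∑ i, ξ i * x i := by
      rw [real_inner_smul_left, inner_eq_sum]
      congr 1
    rw [h1]
    congr 1
    have h2 : 2 * Real.pi * ((2 * Real.pi)⁻¹ * ∑ i, ξ i * x i) = ∑ i, ξ i * x i := by
      field_simp
    rw [h2]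
    simp only [mequiv_apply, sum_coe_eq]
    ring
  have hI : (∫ ξ : EuclideanSpace ℝ (Fin n),
        Complex.exp (Complex.I *
            ∑ i, (((MeasurableEquiv.toLp 2 (Fin n → ℝ)).symm ξ i : ℝ) : ℂ) * (x i : ℂ)) *
          Fneg n (fun y => f y) ((MeasurableEquiv.toLp 2 (Fin n → ℝ)).symm ξ))
      = ∫ ξ : EuclideanSpace ℝ (Fin n), G ((2 * Real.pi)⁻¹ • ξ) :=
    integral_congr_ae (Filter.Eventually.of_forall fun ξ => key ξ)
  rw [hI, MeasureTheory.Measure.integral_comp_inv_smul volume G (2 * Real.pi)]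
  have hrank : Module.finrank ℝ (EuclideanSpace ℝ (Fin n)) = n := finrank_euclideanSpace_fin
  rw [hrank]
  have habs : |(2 * Real.pi) ^ n| = (2 * Real.pi) ^ n := by
    rw [_root_.abs_of_nonneg]
    positivity
  rw [habs, real_smul]
  have hpow : (((2 * Real.pi) ^ n : ℝ) : ℂ) ≠ 0 := by
    simp only [ne_eq, Complex.ofReal_eq_zero]
    positivity
  rw [← mul_assoc, inv_mul_cancel₀ hpow, one_mul]
  have hfinal : (∫ w, G w) = 𝓕⁻
      (𝓕 (fun v => toE f v)) xE := by
    rw [Real.fourierInv_eq']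
    exact integral_congr_ae (Filter.Eventually.of_forall fun w => by
      simp only [hG, smul_eq_mul])
  rw [hfinal]
  have hinv := (toE f).continuous.fourierInv_fourier_eq (toE f).integrable (integrable_fourier_toE f)
  calc 𝓕⁻ (𝓕 (fun v => toE f v)) xE
      = toE f xE := by rw [show (fun v => toE f v) = ⇑(toE f) from rfl, hinv]
    _ = f x := by rw [toE_apply, hx]

lemma continuous_Fpos (f : SchwartzMap (Fin n → ℝ) ℂ) : Continuous (Fpos n (fun y => f y)) := by
  have : Fpos n (fun y => f y) = fun ξ => Fneg n (fun y => f y) (-ξ) := by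
    funext ξ
    exact Fpos_eq_Fneg_neg _ ξ
  rw [this]
  exact (continuous_Fneg f).comp continuous_neg

lemma integrable_Fpos (f : SchwartzMap (Fin n → ℝ) ℂ) :
    Integrable (Fpos n (fun y => f y)) := by
  have : Fpos n (fun y => f y) = fun ξ => Fneg n (fun y => f y) (-ξ) := by
    funext ξ
    exact Fpos_eq_Fneg_neg _ ξ
  rw [this]
  exact (integrable_Fneg f).comp_neg

lemma continuous_mulVec (Θ : Matrix (Fin n) (Fin n) ℝ) :
    Continuous fun ξ : Fin n → ℝ => Θ.mulVec ξ := by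
  have h := LinearMap.continuous_of_finiteDimensional (Matrix.mulVecLin Θ)
  have : ⇑(Matrix.mulVecLin Θ) = fun ξ : Fin n → ℝ => Θ.mulVec ξ := by
    funext ξ
    simp [Matrix.mulVecLin_apply]
  rwa [this] at h

/-- Computation of the inner `y`-integral in the Moyal product. -/
lemma step_inner_y (g : SchwartzMap (Fin n → ℝ) ℂ) (fval : ℂ) (x ξ : Fin n → ℝ) :
    (∫ y : Fin n → ℝ,
        Complex.exp (Complex.I * (∑ i, ξ i * (x i - y i))) * fval * g y)
      = Complex.exp (Complex.I * ∑ i, (ξ i : ℂ) * (x i : ℂ)) * fval *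
          Fneg n (fun y => g y) ξ := by
  unfold Fneg
  rw [← integral_const_mul]
  refine integral_congr_ae (Filter.Eventually.of_forall fun y => ?_)
  simp only [sum_coe_eq]
  have hsplit : (∑ i, ξ i * (x i - y i)) = (∑ i, ξ i * x i) - ∑ i, ξ i * y i := by
    rw [← Finset.sum_sub_distrib]
    exact Finset.sum_congr rfl fun i _ => by ring
  rw [hsplit, Complex.ofReal_sub, mul_sub, sub_eq_add_neg, Complex.exp_add]
  ring

/-- Joint integrability for the first Fubini swap (variables `(ξ, x)`). -/
lemma fubini1 (Θ : Matrix (Fin n) (Fin n) ℝ) (f g : SchwartzMap (Fin n → ℝ) ℂ) :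
    Integrable (fun p : (Fin n → ℝ) × (Fin n → ℝ) =>
      Complex.exp (Complex.I * ∑ i, (p.1 i : ℂ) * (p.2 i : ℂ)) *
        f (p.2 - (1 / 2 : ℝ) • Θ.mulVec p.1) * Fneg n (fun y => g y) p.1)
      (volume.prod volume) := by
  have hcont : Continuous (fun p : (Fin n → ℝ) × (Fin n → ℝ) =>
      Complex.exp (Complex.I * ∑ i, (p.1 i : ℂ) * (p.2 i : ℂ)) *
        f (p.2 - (1 / 2 : ℝ) • Θ.mulVec p.1) * Fneg n (fun y => g y) p.1) := by
    refine Continuous.mul (Continuous.mul ?_ ?_) ?_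
    · exact Complex.continuous_exp.comp (continuous_const.mul (continuous_phase (n := n)))
    · exact f.continuous.comp
        (continuous_snd.sub (((continuous_mulVec Θ).comp continuous_fst).const_smul (1 / 2 : ℝ)))
    · exact (continuous_Fneg g).comp continuous_fst
  rw [integrable_prod_iff hcont.aestronglyMeasurable]
  constructor
  · filter_upwards with ξ
    refine Integrable.mono' (g := fun x : Fin n → ℝ =>
        ‖f (x - (1 / 2 : ℝ) • Θ.mulVec ξ)‖ * ‖Fneg n (fun y => g y) ξ‖)
      (((f.integrable.comp_sub_right _).norm.mul_const _)) ?_ ?_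
    · exact (hcont.comp (Continuous.prodMk_right ξ)).aestronglyMeasurable
    · filter_upwards with x
      rw [norm_mul, norm_mul, norm_exp_phase_pos, one_mul]
  · have heq : (fun ξ : Fin n → ℝ => ∫ x : Fin n → ℝ,
        ‖Complex.exp (Complex.I * ∑ i, (ξ i : ℂ) * (x i : ℂ)) *
          f (x - (1 / 2 : ℝ) • Θ.mulVec ξ) * Fneg n (fun y => g y) ξ‖)
        = fun ξ : Fin n → ℝ => (∫ x : Fin n → ℝ, ‖f x‖) * ‖Fneg n (fun y => g y) ξ‖ := by
      funext ξ
      have h1 : ∀ x : Fin n → ℝ,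
          ‖Complex.exp (Complex.I * ∑ i, (ξ i : ℂ) * (x i : ℂ)) *
            f (x - (1 / 2 : ℝ) • Θ.mulVec ξ) * Fneg n (fun y => g y) ξ‖
          = ‖f (x - (1 / 2 : ℝ) • Θ.mulVec ξ)‖ * ‖Fneg n (fun y => g y) ξ‖ := by
        intro x
        rw [norm_mul, norm_mul, norm_exp_phase_pos, one_mul]
      rw [integral_congr_ae (Filter.Eventually.of_forall h1), integral_mul_const,
        integral_sub_right_eq_self (fun x => ‖f x‖)]
    rw [heq]
    exact (integrable_Fneg g).norm.const_mul _

/-- Computation of the `x`-integral after translation, using skewness. -/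
lemma step_x {Θ : Matrix (Fin n) (Fin n) ℝ} (hΘ : Θ.transpose = -Θ)
    (f : SchwartzMap (Fin n → ℝ) ℂ) (ξ : Fin n → ℝ) :
    (∫ x : Fin n → ℝ, Complex.exp (Complex.I * ∑ i, (ξ i : ℂ) * (x i : ℂ)) *
        f (x - (1 / 2 : ℝ) • Θ.mulVec ξ))
      = Fpos n (fun y => f y) ξ := by
  set c : Fin n → ℝ := (1 / 2 : ℝ) • Θ.mulVec ξ with hc
  have hsum0 : (∑ i, ξ i * c i) = 0 := by
    have h1 : ∀ i, ξ i * c i = (1 / 2 : ℝ) * (ξ i * Θ.mulVec ξ i) := by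
      intro i
      rw [hc]
      simp only [Pi.smul_apply, smul_eq_mul]
      ring
    rw [Finset.sum_congr rfl fun i _ => h1 i, ← Finset.mul_sum, skew_sum hΘ, mul_zero]
  rw [← integral_add_right_eq_self
    (fun x => Complex.exp (Complex.I * ∑ i, (ξ i : ℂ) * (x i : ℂ)) * f (x - c)) c]
  unfold Fpos
  refine integral_congr_ae (Filter.Eventually.of_forall fun u => ?_)
  beta_reduce
  have h2 : (∑ i, (ξ i : ℂ) * (((u + c) i : ℝ) : ℂ)) = ∑ i, (ξ i : ℂ) * ((u i : ℝ) : ℂ) := by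
    simp only [Pi.add_apply, Complex.ofReal_add, mul_add, Finset.sum_add_distrib]
    rw [sum_coe_eq ξ c, hsum0]
    simp
  rw [h2, add_sub_cancel_right]

/-- Joint integrability for the second Fubini swap (variables `(ξ, y)`). -/
lemma fubini2 (f g : SchwartzMap (Fin n → ℝ) ℂ) :
    Integrable (fun p : (Fin n → ℝ) × (Fin n → ℝ) =>
      Fpos n (fun y => f y) p.1 *
        (Complex.exp (-(Complex.I * ∑ i, (p.1 i : ℂ) * (p.2 i : ℂ))) * g p.2))
      (volume.prod volume) := by
  refine Integrable.mono' (g := fun p : (Fin n → ℝ) × (Fin n → ℝ) =>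
      ‖Fpos n (fun y => f y) p.1‖ * ‖g p.2‖) ?_ ?_ ?_
  · exact (integrable_Fpos f).norm.mul_prod g.integrable.norm
  · refine Continuous.aestronglyMeasurable ?_
    refine Continuous.mul ((continuous_Fpos f).comp continuous_fst) (Continuous.mul ?_ ?_)
    · exact Complex.continuous_exp.comp (continuous_const.mul (continuous_phase (n := n))).neg
    · exact g.continuous.comp continuous_snd
  · filter_upwards with p
    rw [norm_mul, norm_mul, norm_exp_phase', one_mul]

end MoyalAux

/-- The Moyal product of two functions on `ℝⁿ` (given by its oscillatory-integral
formula), for a real `n × n` matrix `Θ`. -/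
noncomputable def moyal (n : ℕ) (Θ : Matrix (Fin n) (Fin n) ℝ)
    (f g : (Fin n → ℝ) → ℂ) : (Fin n → ℝ) → ℂ :=
  fun x => (((2 * Real.pi) ^ n : ℝ) : ℂ)⁻¹ *
    ∫ ξ : Fin n → ℝ, ∫ y : Fin n → ℝ,
      Complex.exp (Complex.I * (∑ i, ξ i * (x i - y i))) *
        f (x - (1 / 2 : ℝ) • Θ.mulVec ξ) * g y

/-- The integral of the Moyal product of two Schwartz functions equals the integral
of their pointwise product. -/
theorem integral_moyal_eq_integral_mul (n : ℕ) (Θ : Matrix (Fin n) (Fin n) ℝ)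
    (hΘ : Θ.transpose = -Θ) (f g : SchwartzMap (Fin n → ℝ) ℂ) :
    ∫ x : Fin n → ℝ, moyal n Θ (fun y => f y) (fun y => g y) x
      = ∫ x : Fin n → ℝ, f x * g x := by
  have hstep1 : ∀ x : Fin n → ℝ, moyal n Θ (fun y => f y) (fun y => g y) x
      = (((2 * Real.pi) ^ n : ℝ) : ℂ)⁻¹ *
        ∫ ξ : Fin n → ℝ, Complex.exp (Complex.I * ∑ i, (ξ i : ℂ) * (x i : ℂ)) *
          f (x - (1 / 2 : ℝ) • Θ.mulVec ξ) * Fneg n (fun y => g y) ξ := by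
    intro x
    unfold moyal
    congr 1
    exact integral_congr_ae (Filter.Eventually.of_forall fun ξ => step_inner_y g _ x ξ)
  rw [integral_congr_ae (Filter.Eventually.of_forall hstep1), integral_const_mul]
  have hswap1 : (∫ x : Fin n → ℝ, ∫ ξ : Fin n → ℝ,
        Complex.exp (Complex.I * ∑ i, (ξ i : ℂ) * (x i : ℂ)) *
          f (x - (1 / 2 : ℝ) • Θ.mulVec ξ) * Fneg n (fun y => g y) ξ)
      = ∫ ξ : Fin n → ℝ, ∫ x : Fin n → ℝ,
        Complex.exp (Complex.I * ∑ i, (ξ i : ℂ) * (x i : ℂ)) *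
          f (x - (1 / 2 : ℝ) • Θ.mulVec ξ) * Fneg n (fun y => g y) ξ :=
    (integral_integral_swap (f := fun ξ x =>
      Complex.exp (Complex.I * ∑ i, (ξ i : ℂ) * (x i : ℂ)) *
        f (x - (1 / 2 : ℝ) • Θ.mulVec ξ) * Fneg n (fun y => g y) ξ)
      (fubini1 Θ f g)).symm
  rw [hswap1]
  have hstep2 : ∀ ξ : Fin n → ℝ, (∫ x : Fin n → ℝ,
        Complex.exp (Complex.I * ∑ i, (ξ i : ℂ) * (x i : ℂ)) *
          f (x - (1 / 2 : ℝ) • Θ.mulVec ξ) * Fneg n (fun y => g y) ξ)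
      = Fpos n (fun y => f y) ξ * Fneg n (fun y => g y) ξ := by
    intro ξ
    rw [integral_mul_const, step_x hΘ f ξ]
  rw [integral_congr_ae (Filter.Eventually.of_forall hstep2)]
  have hstep3 : ∀ ξ : Fin n → ℝ,
      Fpos n (fun y => f y) ξ * Fneg n (fun y => g y) ξ
      = ∫ y : Fin n → ℝ, Fpos n (fun y => f y) ξ *
          (Complex.exp (-(Complex.I * ∑ i, (ξ i : ℂ) * (y i : ℂ))) * g y) := by
    intro ξ
    rw [integral_const_mul]
    rfl
  rw [integral_congr_ae (Filter.Eventually.of_forall hstep3)]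
  rw [integral_integral_swap (f := fun ξ y => Fpos n (fun y => f y) ξ *
      (Complex.exp (-(Complex.I * ∑ i, (ξ i : ℂ) * (y i : ℂ))) * g y)) (fubini2 f g)]
  have hstep4 : ∀ y : Fin n → ℝ,
      (∫ ξ : Fin n → ℝ, Fpos n (fun y => f y) ξ *
        (Complex.exp (-(Complex.I * ∑ i, (ξ i : ℂ) * (y i : ℂ))) * g y))
      = (∫ ξ : Fin n → ℝ,
          Complex.exp (Complex.I * ∑ i, (ξ i : ℂ) * (y i : ℂ)) *
            Fneg n (fun y => f y) ξ) * g y := by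
    intro y
    rw [← integral_mul_const]
    rw [← integral_neg_eq_self (fun ξ : Fin n → ℝ => Fpos n (fun y => f y) ξ *
      (Complex.exp (-(Complex.I * ∑ i, (ξ i : ℂ) * (y i : ℂ))) * g y)) volume]
    refine integral_congr_ae (Filter.Eventually.of_forall fun ξ => ?_)
    beta_reduce
    rw [Fpos_eq_Fneg_neg, neg_neg]
    have hphase : (∑ i, (((-ξ) i : ℝ) : ℂ) * ((y i : ℝ) : ℂ))
        = -∑ i, ((ξ i : ℝ) : ℂ) * ((y i : ℝ) : ℂ) := by
      rw [← Finset.sum_neg_distrib]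
      refine Finset.sum_congr rfl fun i _ => ?_
      simp only [Pi.neg_apply, Complex.ofReal_neg]
      ring
    rw [hphase]
    rw [mul_neg, neg_neg]
    ring
  rw [integral_congr_ae (Filter.Eventually.of_forall hstep4), ← integral_const_mul]
  refine integral_congr_ae (Filter.Eventually.of_forall fun y => ?_)
  beta_reduce
  rw [← mul_assoc, inversion f y]
end

section
/- For Schwartz functions f, g on ℝⁿ, the Moyal product satisfies the Leibniz rule: ∂_μ(f ⋆_Θ g) = (∂_μ f) ⋆_Θ g + f ⋆_Θ (∂_μ g) for each coordinate direction μ. -/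
open MeasureTheory Complex


/-- The partial derivative in the `μ`-th coordinate direction. -/
noncomputable def pderiv' (n : ℕ) (μ : Fin n) (f : (Fin n → ℝ) → ℂ) :
    (Fin n → ℝ) → ℂ :=
  fun x => fderiv ℝ f x (Pi.single μ 1)

namespace MoyalProof

open SchwartzMap Real

variable {n : ℕ}

noncomputable def Lraw (n : ℕ) : (Fin n → ℝ) →L[ℝ] (Fin n → ℝ) →L[ℝ] ℝ :=
  ∑ i, (ContinuousLinearMap.proj i).smulRight (ContinuousLinearMap.proj i)

@[simp] lemma Lraw_apply (v w : Fin n → ℝ) : Lraw n v w = ∑ i, v i * w i := by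
  simp [Lraw]

lemma Lraw_apply' (v : Fin n → ℝ) :
    Lraw n v = ∑ i, v i • (ContinuousLinearMap.proj i : (Fin n → ℝ) →L[ℝ] ℝ) := by
  ext w; simp [Lraw, mul_comm]

lemma norm_Lraw_le (v : Fin n → ℝ) : ‖Lraw n v‖ ≤ n * ‖v‖ := by
  rw [Lraw_apply']
  refine (norm_sum_le _ _).trans ?_
  have : ∀ i : Fin n, ‖v i • (ContinuousLinearMap.proj i : (Fin n → ℝ) →L[ℝ] ℝ)‖ ≤ ‖v‖ := by
    intro i
    refine ContinuousLinearMap.opNorm_le_bound _ (norm_nonneg v) (fun x => ?_)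
    simp only [ContinuousLinearMap.smul_apply, ContinuousLinearMap.proj_apply, smul_eq_mul,
      Real.norm_eq_abs, abs_mul]
    exact mul_le_mul (norm_le_pi_norm v i) (norm_le_pi_norm x i) (abs_nonneg _) (norm_nonneg _)
  calc ∑ i, ‖v i • (ContinuousLinearMap.proj i : (Fin n → ℝ) →L[ℝ] ℝ)‖
      ≤ ∑ _i : Fin n, ‖v‖ := Finset.sum_le_sum (fun i _ => this i)
    _ = n * ‖v‖ := by simp [mul_comm]

noncomputable def mL (n : ℕ) : (Fin n → ℝ) →L[ℝ] (Fin n → ℝ) →L[ℝ] ℝ := (2 * π)⁻¹ • Lraw n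

@[simp] lemma mL_apply (v w : Fin n → ℝ) : mL n v w = (2 * π)⁻¹ * ∑ i, v i * w i := by
  simp [mL]

noncomputable def eqE (n : ℕ) : (Fin n → ℝ) ≃L[ℝ] EuclideanSpace ℝ (Fin n) :=
  ((LinearEquiv.smulOfNeZero ℝ (Fin n → ℝ) (2 * π)⁻¹
      (by positivity)).toContinuousLinearEquiv).trans
    (EuclideanSpace.equiv (Fin n) ℝ).symm

noncomputable def ftS (n : ℕ) (g : SchwartzMap (Fin n → ℝ) ℂ) : SchwartzMap (Fin n → ℝ) ℂ :=
  compCLMOfContinuousLinearEquiv ℝ (eqE n)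
    (fourierTransformCLM ℝ
      (compCLMOfContinuousLinearEquiv ℝ (EuclideanSpace.equiv (Fin n) ℝ) g))

lemma ftS_apply (g : SchwartzMap (Fin n → ℝ) ℂ) (ξ : Fin n → ℝ) :
    ftS n g ξ = ∫ y : Fin n → ℝ,
      Complex.exp (-(Complex.I * ((∑ i, ξ i * y i : ℝ) : ℂ))) * g y := by
  have h1 : ftS n g ξ = FourierTransform.fourier
      (⇑(compCLMOfContinuousLinearEquiv ℝ (EuclideanSpace.equiv (Fin n) ℝ) g)) (eqE n ξ) := rfl
  rw [h1, Real.fourier_eq]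
  have hmp := (EuclideanSpace.volume_preserving_symm_measurableEquiv_toLp (Fin n)).symm
  rw [← hmp.integral_comp (MeasurableEquiv.toLp 2 (Fin n → ℝ)).symm.symm.measurableEmbedding]
  refine integral_congr_ae (Filter.Eventually.of_forall (fun y => ?_))
  dsimp only
  have hy : ∀ i, ((MeasurableEquiv.toLp 2 (Fin n → ℝ)).symm.symm y) i = y i := fun i => rfl
  have hg : (compCLMOfContinuousLinearEquiv ℝ (EuclideanSpace.equiv (Fin n) ℝ) g)
      ((MeasurableEquiv.toLp 2 (Fin n → ℝ)).symm.symm y) = g y := rfl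
  rw [hg]
  congr 1
  have hinner : (inner ℝ ((MeasurableEquiv.toLp 2 (Fin n → ℝ)).symm.symm y) (eqE n ξ) : ℝ)
      = (2 * π)⁻¹ * ∑ i, ξ i * y i := by
    rw [PiLp.inner_apply]
    have he : ∀ i, (eqE n ξ) i = (2 * π)⁻¹ * ξ i := fun i => rfl
    simp only [RCLike.inner_apply, conj_trivial, hy, he]
    rw [Finset.mul_sum]
    exact Finset.sum_congr rfl (fun i _ => by ring)
  rw [Circle.smul_def, Real.fourierChar_apply, hinner]
  congr 1
  have : 2 * π * -((2 * π)⁻¹ * ∑ i, ξ i * y i) = -(∑ i, ξ i * y i) := by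
    field_simp
  push_cast [this]
  ring



lemma vf_eq (h : (Fin n → ℝ) → ℂ) (ξ : Fin n → ℝ) :
    VectorFourier.fourierIntegral Real.fourierChar volume (mL n).toLinearMap₁₂ h ξ
      = ∫ y : Fin n → ℝ, Complex.exp (-(Complex.I * ((∑ i, ξ i * y i : ℝ) : ℂ))) * h y := by
  rw [VectorFourier.fourierIntegral]
  refine integral_congr_ae (Filter.Eventually.of_forall (fun y => ?_))
  dsimp only
  rw [Circle.smul_def, Real.fourierChar_apply, ContinuousLinearMap.toLinearMap₁₂_apply_apply_apply, mL_apply]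
  congr 1
  have h2 : (∑ i, y i * ξ i) = ∑ i, ξ i * y i :=
    Finset.sum_congr rfl (fun i _ => mul_comm _ _)
  have h1 : 2 * π * -((2 * π)⁻¹ * ∑ i, y i * ξ i) = -(∑ i, ξ i * y i) := by
    rw [h2]; field_simp
  rw [h1]
  push_cast
  ring

lemma ft_pderiv (g : SchwartzMap (Fin n → ℝ) ℂ) (m : Fin n) (ξ : Fin n → ℝ) :
    (∫ y : Fin n → ℝ, Complex.exp (-(Complex.I * ((∑ i, ξ i * y i : ℝ) : ℂ)))
        * fderiv ℝ (⇑g) y (Pi.single m 1))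
      = Complex.I * ξ m * ftS n g ξ := by
  have hcoe : ⇑(SchwartzMap.fderivCLM ℝ (E := (Fin n → ℝ)) (F := ℂ) g)
      = fun y => fderiv ℝ (⇑g) y := funext (fun y => SchwartzMap.fderivCLM_apply ℝ g y)
  have hI : Integrable (fun y => fderiv ℝ (⇑g) y) volume := by
    rw [← hcoe]; exact SchwartzMap.integrable _
  have key := VectorFourier.fourierIntegral_fderiv (mL n) g.integrable g.differentiable hI
  have h1 := congrArg (fun T => T (Pi.single m 1)) (congrFun key ξ)
  rw [VectorFourier.fourierIntegral_continuousLinearMap_apply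
      Real.continuous_fourierChar hI, vf_eq] at h1
  rw [h1, VectorFourier.fourierSMulRight_apply, vf_eq, ← ftS_apply]
  have hsingle : (∑ i, (Pi.single m 1 : Fin n → ℝ) i * ξ i) = ξ m := by
    simp [Pi.single_apply]
  simp only [ContinuousLinearMap.neg_apply, ContinuousLinearMap.flip_apply, mL_apply, hsingle,
    neg_smul, smul_smul, smul_eq_mul, Complex.real_smul]
  push_cast
  have hpi : (π : ℂ) ≠ 0 := by
    simpa using Real.pi_ne_zero
  field_simp


lemma moyal_eq (Θ : Matrix (Fin n) (Fin n) ℝ) (f' g' : (Fin n → ℝ) → ℂ) (x : Fin n → ℝ) :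
    moyal n Θ f' g' x = (((2 * Real.pi) ^ n : ℝ) : ℂ)⁻¹ *
      ∫ ξ : Fin n → ℝ, Complex.exp (Complex.I * ((∑ i, ξ i * x i : ℝ) : ℂ)) *
        f' (x - (1 / 2 : ℝ) • Θ.mulVec ξ) *
        ∫ y : Fin n → ℝ, Complex.exp (-(Complex.I * ((∑ i, ξ i * y i : ℝ) : ℂ))) * g' y := by
  rw [moyal]
  congr 1
  refine integral_congr_ae (Filter.Eventually.of_forall (fun ξ => ?_))
  dsimp only
  rw [← integral_const_mul]
  refine integral_congr_ae (Filter.Eventually.of_forall (fun y => ?_))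
  dsimp only
  have hsum : (∑ i, ξ i * (x i - y i)) = (∑ i, ξ i * x i) - (∑ i, ξ i * y i) := by
    rw [← Finset.sum_sub_distrib]
    exact Finset.sum_congr rfl (fun i _ => by ring)
  rw [hsum]
  have harg : Complex.I * (((∑ i, ξ i * x i) - (∑ i, ξ i * y i) : ℝ) : ℂ)
      = Complex.I * ((∑ i, ξ i * x i : ℝ) : ℂ) + -(Complex.I * ((∑ i, ξ i * y i : ℝ) : ℂ)) := by
    push_cast
    ring
  rw [harg, Complex.exp_add]
  ring

section Main

variable {n : ℕ}

lemma cont_sum (x : Fin n → ℝ) : Continuous fun ξ : Fin n → ℝ => (∑ i, ξ i * x i : ℝ) :=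
  continuous_finset_sum _ (fun i _ => (continuous_apply i).mul continuous_const)

lemma cont_exp (x : Fin n → ℝ) :
    Continuous fun ξ : Fin n → ℝ => Complex.exp (Complex.I * ((∑ i, ξ i * x i : ℝ) : ℂ)) :=
  Complex.continuous_exp.comp
    (continuous_const.mul (Complex.continuous_ofReal.comp (cont_sum x)))

lemma cont_sub (Θ : Matrix (Fin n) (Fin n) ℝ) (x : Fin n → ℝ) :
    Continuous fun ξ : Fin n → ℝ => x - (1 / 2 : ℝ) • Θ.mulVec ξ := by
  refine continuous_const.sub (Continuous.fun_const_smul ?_ _)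
  refine continuous_pi fun i => ?_
  simp only [Matrix.mulVec, dotProduct]
  exact continuous_finset_sum _ (fun j _ => continuous_const.mul (continuous_apply j))

lemma norm_cexp_I_mul (r : ℝ) : ‖Complex.exp (Complex.I * (r : ℂ))‖ = 1 := by
  rw [Complex.norm_exp]
  simp

set_option maxHeartbeats 1000000 in
theorem moyal_leibniz' (Θ : Matrix (Fin n) (Fin n) ℝ)
    (f g : SchwartzMap (Fin n → ℝ) ℂ) (μ : Fin n) (x : Fin n → ℝ) :
      pderiv' n μ (moyal n Θ (fun y => f y) (fun y => g y)) x
        = moyal n Θ (pderiv' n μ (fun y => f y)) (fun y => g y) x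
          + moyal n Θ (fun y => f y) (pderiv' n μ (fun y => g y)) x := by
  classical
  set c : ℂ := (((2 * Real.pi) ^ n : ℝ) : ℂ)⁻¹ with hc
  set e : Fin n → ℝ := Pi.single μ 1 with he
  set A : (Fin n → ℝ) → (Fin n → ℝ) := fun ξ => (1 / 2 : ℝ) • Θ.mulVec ξ with hA
  set G : SchwartzMap (Fin n → ℝ) ℂ := ftS n g with hG
  set F : (Fin n → ℝ) → (Fin n → ℝ) → ℂ := fun z ξ =>
    Complex.exp (Complex.I * ((∑ i, ξ i * z i : ℝ) : ℂ)) * f (z - A ξ) * G ξ with hF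
  set D : (Fin n → ℝ) → (Fin n → ℝ) → ((Fin n → ℝ) →L[ℝ] ℂ) := fun z ξ =>
    G ξ • (Complex.exp (Complex.I * ((∑ i, ξ i * z i : ℝ) : ℂ)) • fderiv ℝ (⇑f) (z - A ξ)
      + f (z - A ξ) • (Complex.exp (Complex.I * ((∑ i, ξ i * z i : ℝ) : ℂ)) •
          (Complex.I • (Complex.ofRealCLM.comp (Lraw n ξ))))) with hD
  set Cf : ℝ := (SchwartzMap.seminorm ℝ 0 0) f with hCf
  set Cf' : ℝ := (SchwartzMap.seminorm ℝ 0 0) (SchwartzMap.fderivCLM ℝ (Fin n → ℝ) ℂ f) with hCf'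
  set B : (Fin n → ℝ) → ℝ := fun ξ => ‖G ξ‖ * (Cf' + Cf * (n * ‖ξ‖)) with hB
  -- bounds on f and its derivative
  have hfb : ∀ w, ‖f w‖ ≤ Cf := fun w => SchwartzMap.norm_le_seminorm ℝ f w
  have hfb' : ∀ w, ‖fderiv ℝ (⇑f) w‖ ≤ Cf' := by
    intro w
    have := SchwartzMap.norm_le_seminorm ℝ (SchwartzMap.fderivCLM ℝ (Fin n → ℝ) ℂ f) w
    rwa [SchwartzMap.fderivCLM_apply] at this
  have hCf0 : 0 ≤ Cf := (norm_nonneg _).trans (hfb 0)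
  have hCf'0 : 0 ≤ Cf' := (norm_nonneg _).trans (hfb' 0)
  -- differentiability of the integrand
  have hdiff : ∀ (z ξ : Fin n → ℝ), HasFDerivAt (fun w => F w ξ) (D z ξ) z := by
    intro z ξ
    have hS : HasFDerivAt (fun w : Fin n → ℝ => ∑ i, ξ i * w i) (Lraw n ξ) z := by
      rw [Lraw_apply']
      exact HasFDerivAt.fun_sum fun i _ =>
        ((ContinuousLinearMap.proj i : (Fin n → ℝ) →L[ℝ] ℝ).hasFDerivAt).const_mul (ξ i)
    have h1 : HasFDerivAt (fun w : Fin n → ℝ => ((∑ i, ξ i * w i : ℝ) : ℂ))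
        (Complex.ofRealCLM.comp (Lraw n ξ)) z := Complex.ofRealCLM.hasFDerivAt.comp z hS
    have h2 : HasFDerivAt (fun w : Fin n → ℝ =>
          Complex.exp (Complex.I * ((∑ i, ξ i * w i : ℝ) : ℂ)))
        (Complex.exp (Complex.I * ((∑ i, ξ i * z i : ℝ) : ℂ)) •
          (Complex.I • (Complex.ofRealCLM.comp (Lraw n ξ)))) z := (h1.const_mul Complex.I).cexp
    have h3 : HasFDerivAt (fun w : Fin n → ℝ => (f (w - A ξ) : ℂ))
        (fderiv ℝ (⇑f) (z - A ξ)) z := by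
      have hid : HasFDerivAt (fun w : Fin n → ℝ => w - A ξ)
          (ContinuousLinearMap.id ℝ (Fin n → ℝ)) z := (hasFDerivAt_id z).sub_const _
      have hfz := (f.differentiable (z - A ξ)).hasFDerivAt
      have := hfz.comp z hid; rw [ContinuousLinearMap.comp_id] at this; exact this
    exact (h2.mul h3).mul_const (G ξ)
  -- the uniform bound
  have hbound : ∀ (z ξ : Fin n → ℝ), ‖D z ξ‖ ≤ B ξ := by
    intro z ξ
    rw [hD]
    dsimp only
    refine le_trans (ContinuousLinearMap.opNorm_smul_le (G ξ) _) ?_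
    refine mul_le_mul_of_nonneg_left ?_ (norm_nonneg _)
    refine (norm_add_le _ _).trans ?_
    have t1 : ‖Complex.exp (Complex.I * ((∑ i, ξ i * z i : ℝ) : ℂ)) •
        fderiv ℝ (⇑f) (z - A ξ)‖ ≤ Cf' := by
      refine le_trans (ContinuousLinearMap.opNorm_smul_le _ (fderiv ℝ (⇑f) (z - A ξ))) ?_
      rw [norm_cexp_I_mul, one_mul]
      exact hfb' _
    have t2 : ‖f (z - A ξ) • (Complex.exp (Complex.I * ((∑ i, ξ i * z i : ℝ) : ℂ)) •
        (Complex.I • (Complex.ofRealCLM.comp (Lraw n ξ))))‖ ≤ Cf * (n * ‖ξ‖) := by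
      refine le_trans (ContinuousLinearMap.opNorm_smul_le (f (z - A ξ)) _) ?_
      have hM : ‖Complex.exp (Complex.I * ((∑ i, ξ i * z i : ℝ) : ℂ)) •
          (Complex.I • (Complex.ofRealCLM.comp (Lraw n ξ)))‖ ≤ (n : ℝ) * ‖ξ‖ := by
        refine le_trans (ContinuousLinearMap.opNorm_smul_le _ (Complex.I • (Complex.ofRealCLM.comp (Lraw n ξ)))) ?_
        rw [norm_cexp_I_mul, one_mul]
        refine le_trans (ContinuousLinearMap.opNorm_smul_le Complex.I (Complex.ofRealCLM.comp (Lraw n ξ))) ?_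
        rw [Complex.norm_I, one_mul]
        refine (ContinuousLinearMap.opNorm_comp_le _ _).trans ?_
        have h1 : ‖(Complex.ofRealCLM : ℝ →L[ℝ] ℂ)‖ ≤ 1 := by
          refine ContinuousLinearMap.opNorm_le_bound _ zero_le_one (fun r => ?_)
          simp
        calc ‖(Complex.ofRealCLM : ℝ →L[ℝ] ℂ)‖ * ‖Lraw n ξ‖
            ≤ 1 * ((n : ℝ) * ‖ξ‖) :=
              mul_le_mul h1 (norm_Lraw_le ξ) (norm_nonneg _) zero_le_one
          _ = (n : ℝ) * ‖ξ‖ := one_mul _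
      exact mul_le_mul (hfb _) hM (norm_nonneg _) hCf0
    exact (add_le_add t1 t2)
  -- integrability of the bound
  have hBint : Integrable B volume := by
    have h1 : Integrable (fun ξ : Fin n → ℝ => ‖G ξ‖ * Cf') volume :=
      G.integrable.norm.mul_const _
    have h2 : Integrable (fun ξ : Fin n → ℝ => (Cf * n) * (‖ξ‖ * ‖G ξ‖)) volume := by
      have := (G.integrable_pow_mul volume 1).const_mul (Cf * n)
      simpa [pow_one] using this
    have := h1.add h2
    refine this.congr (Filter.Eventually.of_forall fun ξ => ?_)
    simp only [Pi.add_apply]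
    ring
  -- continuity, hence measurability, of the integrands
  have hFcont : ∀ z, Continuous fun ξ => F z ξ := by
    intro z
    exact ((cont_exp z).mul ((f.continuous).comp (cont_sub Θ z))).mul G.continuous
  have hDcont : Continuous fun ξ => D x ξ := by
    rw [hD]
    refine G.continuous.smul (Continuous.add ?_ ?_)
    · exact (cont_exp x).smul
        ((SchwartzMap.fderivCLM ℝ (Fin n → ℝ) ℂ f).continuous.comp (cont_sub Θ x))
    · refine ((f.continuous).comp (cont_sub Θ x)).smul ((cont_exp x).smul ?_)
      refine Continuous.fun_const_smul ?_ _
      exact (((ContinuousLinearMap.compL ℝ (Fin n → ℝ) ℝ ℂ) Complex.ofRealCLM).continuous).comp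
        (Lraw n).continuous
  -- integrability of F
  have hFint : ∀ z, Integrable (fun ξ => F z ξ) volume := by
    intro z
    refine Integrable.mono' (G.integrable.norm.const_mul Cf)
      ((hFcont z).aestronglyMeasurable) (Filter.Eventually.of_forall fun ξ => ?_)
    rw [hF]
    dsimp only
    rw [norm_mul, norm_mul, norm_cexp_I_mul, one_mul]
    exact mul_le_mul_of_nonneg_right (hfb _) (norm_nonneg _)
  have hDint : Integrable (fun ξ => D x ξ) volume :=
    Integrable.mono' hBint hDcont.aestronglyMeasurable
      (Filter.Eventually.of_forall fun ξ => hbound x ξ)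
  -- derivative of the parametric integral
  have hmain : HasFDerivAt (fun z => ∫ ξ, F z ξ) (∫ ξ, D x ξ) x := by
    refine hasFDerivAt_integral_of_dominated_of_fderiv_le Filter.univ_mem
      (Filter.Eventually.of_forall fun z => (hFcont z).aestronglyMeasurable)
      (hFint x) hDcont.aestronglyMeasurable
      (Filter.Eventually.of_forall fun ξ => fun z _ => hbound z ξ) hBint
      (Filter.Eventually.of_forall fun ξ => fun z _ => hdiff z ξ)
  have hmoyal : (moyal n Θ (fun y => f y) (fun y => g y)) = fun z => c * ∫ ξ, F z ξ := by
    funext z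
    rw [moyal_eq]
    congr 1
    refine integral_congr_ae (Filter.Eventually.of_forall fun ξ => ?_)
    rw [hF]
    dsimp only
    rw [hG, ftS_apply]
  -- compute the left-hand side
  have hLHS : pderiv' n μ (moyal n Θ (fun y => f y) (fun y => g y)) x
      = c * ∫ ξ, D x ξ e := by
    rw [pderiv', hmoyal, (hmain.const_mul c).fderiv]
    rw [ContinuousLinearMap.smul_apply, ContinuousLinearMap.integral_apply hDint]
    rw [smul_eq_mul]
  -- pointwise evaluation of D at the basis direction
  have hsingle : ∀ ξ : Fin n → ℝ, (∑ i, ξ i * (Pi.single μ 1 : Fin n → ℝ) i) = ξ μ := by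
    intro ξ
    simp [Pi.single_apply]
  have hDapply : ∀ ξ : Fin n → ℝ, D x ξ e =
      Complex.exp (Complex.I * ((∑ i, ξ i * x i : ℝ) : ℂ)) * fderiv ℝ (⇑f) (x - A ξ) e * G ξ
      + Complex.exp (Complex.I * ((∑ i, ξ i * x i : ℝ) : ℂ)) * f (x - A ξ)
          * (Complex.I * (ξ μ : ℝ) * G ξ) := by
    intro ξ
    rw [hD]
    dsimp only
    simp only [ContinuousLinearMap.smul_apply, ContinuousLinearMap.add_apply,
      ContinuousLinearMap.coe_comp', Function.comp_apply, Complex.ofRealCLM_apply,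
      Lraw_apply, smul_eq_mul]
    rw [he, hsingle]
    ring
  -- integrability of the two summands
  have hT1cont : Continuous fun ξ : Fin n → ℝ =>
      Complex.exp (Complex.I * ((∑ i, ξ i * x i : ℝ) : ℂ)) *
        fderiv ℝ (⇑f) (x - A ξ) e * G ξ := by
    refine ((cont_exp x).mul ?_).mul G.continuous
    have hcont : Continuous fun ξ : Fin n → ℝ => fderiv ℝ (⇑f) (x - A ξ) := by
      have h := (SchwartzMap.fderivCLM ℝ (Fin n → ℝ) ℂ f).continuous.comp (cont_sub Θ x)
      exact h
    exact (ContinuousLinearMap.apply ℝ ℂ e).continuous.comp hcont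
  have hT1int : Integrable (fun ξ : Fin n → ℝ =>
      Complex.exp (Complex.I * ((∑ i, ξ i * x i : ℝ) : ℂ)) *
        fderiv ℝ (⇑f) (x - A ξ) e * G ξ) volume := by
    refine Integrable.mono' (G.integrable.norm.const_mul (Cf' * ‖e‖))
      hT1cont.aestronglyMeasurable (Filter.Eventually.of_forall fun ξ => ?_)
    rw [norm_mul, norm_mul, norm_cexp_I_mul, one_mul]
    refine mul_le_mul_of_nonneg_right ?_ (norm_nonneg _)
    calc ‖fderiv ℝ (⇑f) (x - A ξ) e‖ ≤ ‖fderiv ℝ (⇑f) (x - A ξ)‖ * ‖e‖ :=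
          ContinuousLinearMap.le_opNorm _ _
      _ ≤ Cf' * ‖e‖ := mul_le_mul_of_nonneg_right (hfb' _) (norm_nonneg _)
  have hT2cont : Continuous fun ξ : Fin n → ℝ =>
      Complex.exp (Complex.I * ((∑ i, ξ i * x i : ℝ) : ℂ)) * f (x - A ξ)
        * (Complex.I * (ξ μ : ℝ) * G ξ) := by
    refine ((cont_exp x).mul ((f.continuous).comp (cont_sub Θ x))).mul ?_
    exact (continuous_const.mul (Complex.continuous_ofReal.comp (continuous_apply μ))).mul
      G.continuous
  have hT2int : Integrable (fun ξ : Fin n → ℝ =>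
      Complex.exp (Complex.I * ((∑ i, ξ i * x i : ℝ) : ℂ)) * f (x - A ξ)
        * (Complex.I * (ξ μ : ℝ) * G ξ)) volume := by
    have hb : Integrable (fun ξ : Fin n → ℝ => Cf * (‖ξ‖ * ‖G ξ‖)) volume := by
      have := (G.integrable_pow_mul volume 1).const_mul Cf
      simpa [pow_one] using this
    refine Integrable.mono' hb hT2cont.aestronglyMeasurable
      (Filter.Eventually.of_forall fun ξ => ?_)
    have hm3 : ‖Complex.I * ((ξ μ : ℝ) : ℂ) * G ξ‖ = ‖(ξ μ : ℝ)‖ * ‖G ξ‖ := by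
      rw [norm_mul, norm_mul, Complex.norm_I, one_mul, Complex.norm_real]
    calc ‖Complex.exp (Complex.I * ((∑ i, ξ i * x i : ℝ) : ℂ)) * f (x - A ξ)
          * (Complex.I * ((ξ μ : ℝ) : ℂ) * G ξ)‖
        = ‖Complex.exp (Complex.I * ((∑ i, ξ i * x i : ℝ) : ℂ))‖ * ‖f (x - A ξ)‖
          * ‖Complex.I * ((ξ μ : ℝ) : ℂ) * G ξ‖ := by rw [norm_mul, norm_mul]
      _ = ‖f (x - A ξ)‖ * (‖(ξ μ : ℝ)‖ * ‖G ξ‖) := by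
          rw [norm_cexp_I_mul, one_mul, hm3]
      _ ≤ Cf * (‖ξ‖ * ‖G ξ‖) :=
          mul_le_mul (hfb _) (mul_le_mul_of_nonneg_right (norm_le_pi_norm ξ μ) (norm_nonneg _))
            (by positivity) hCf0
  -- rewrite the two right-hand terms
  have hRHS1 : moyal n Θ (pderiv' n μ (fun y => f y)) (fun y => g y) x
      = c * ∫ ξ : Fin n → ℝ, Complex.exp (Complex.I * ((∑ i, ξ i * x i : ℝ) : ℂ)) *
          fderiv ℝ (⇑f) (x - A ξ) e * G ξ := by
    rw [moyal_eq]
    rw [← hc]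
    congr 1
    refine integral_congr_ae (Filter.Eventually.of_forall fun ξ => ?_)
    dsimp only
    rw [hG, ftS_apply]
    simp only [pderiv']
    rfl
  have hRHS2 : moyal n Θ (fun y => f y) (pderiv' n μ (fun y => g y)) x
      = c * ∫ ξ : Fin n → ℝ, Complex.exp (Complex.I * ((∑ i, ξ i * x i : ℝ) : ℂ)) * f (x - A ξ)
        * (Complex.I * (ξ μ : ℝ) * G ξ) := by
    rw [moyal_eq]
    rw [← hc]
    congr 1
    refine integral_congr_ae (Filter.Eventually.of_forall fun ξ => ?_)
    dsimp only
    have hft : (∫ y : Fin n → ℝ, Complex.exp (-(Complex.I * ((∑ i, ξ i * y i : ℝ) : ℂ))) *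
        pderiv' n μ (fun y => (g y : ℂ)) y) = Complex.I * ((ξ μ : ℝ) : ℂ) * ftS n g ξ := by
      simp only [pderiv']
      exact ft_pderiv g μ ξ
    rw [hft, ← hG]
  rw [hLHS, hRHS1, hRHS2, ← mul_add, ← integral_add hT1int hT2int]
  congr 1
  refine integral_congr_ae (Filter.Eventually.of_forall fun ξ => ?_)
  exact hDapply ξ

end Main

end MoyalProof

/-- Leibniz rule for the Moyal product of Schwartz functions:
`∂_μ (f ⋆_Θ g) = (∂_μ f) ⋆_Θ g + f ⋆_Θ (∂_μ g)`. -/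
theorem moyal_leibniz (n : ℕ) (Θ : Matrix (Fin n) (Fin n) ℝ)
    (hΘ : Θ.transpose = -Θ) (f g : SchwartzMap (Fin n → ℝ) ℂ) (μ : Fin n) :
    ∀ x : Fin n → ℝ,
      pderiv' n μ (moyal n Θ (fun y => f y) (fun y => g y)) x
        = moyal n Θ (pderiv' n μ (fun y => f y)) (fun y => g y) x
          + moyal n Θ (fun y => f y) (pderiv' n μ (fun y => g y)) x := by
  intro x
  exact MoyalProof.moyal_leibniz' Θ f g μ x
end

section
/- The leading term of the heat trace for the flat Laplacian with Moyal regularization: for f ∈ S(ℝⁿ) and t > 0, the operator L^Θ(f) e^{tΔ} (Δ = ∑_μ ∂_μ² the flat Laplacian on L²(ℝⁿ)) is trace class and Tr(L^Θ(f) e^{tΔ}) = (4πt)^{-n/2} ∫_{ℝⁿ} f(x) dx. -/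
open MeasureTheory Complex

/-- The heat semigroup `e^{tΔ}` of the flat Laplacian, given by its Gaussian
kernel `(4πt)^{-n/2} e^{-|x-y|²/(4t)}`. -/
noncomputable def flatHeat (n : ℕ) (t : ℝ) (ψ : (Fin n → ℝ) → ℂ) :
    (Fin n → ℝ) → ℂ :=
  fun x => ∫ y : Fin n → ℝ,
    ((((4 * Real.pi * t) ^ ((n : ℝ) / 2))⁻¹ : ℝ) : ℂ) *
      ((Real.exp (-(∑ i, (x i - y i) ^ 2) / (4 * t)) : ℝ) : ℂ) * ψ y

/-- The Schwartz kernel of the regularized heat operator `L^Θ(f) e^{tΔ}`. -/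
noncomputable def moyalHeatKernel (n : ℕ) (Θ : Matrix (Fin n) (Fin n) ℝ)
    (f : (Fin n → ℝ) → ℂ) (t : ℝ) : (Fin n → ℝ) → (Fin n → ℝ) → ℂ :=
  fun x y => (((2 * Real.pi) ^ n : ℝ) : ℂ)⁻¹ *
    ∫ ξ : Fin n → ℝ,
      Complex.exp (Complex.I * (∑ i, ξ i * (x i - y i))) *
        f (x - (1 / 2 : ℝ) • Θ.mulVec ξ) *
        ((Real.exp (-t * ∑ i, ξ i ^ 2) : ℝ) : ℂ)

/-! ### Auxiliary lemmas -/

lemma gauss1d {t : ℝ} (ht : 0 < t) (ξ x z : ℝ) :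
    ∫ u : ℝ, cexp (I * (ξ * (x - u)) - (u - z)^2 / (4*t))
      = ↑(Real.sqrt (4*Real.pi*t)) * cexp (I * (ξ * (x - z)) - t * ξ^2) := by
  have h4t : (0:ℝ) < 4*t := by linarith
  rw [← integral_add_right_eq_self (fun u : ℝ => cexp (I * (ξ * (x - u)) - (u - z)^2 / (4*t))) z]
  have h1 : ∀ u : ℝ, cexp (I * (ξ * (x - (u + z))) - ((u:ℂ) + z - z)^2 / (4*t))
      = cexp (I * (ξ * (x - z))) * (cexp (I * (-ξ) * u) * cexp (-(1/(4*t) : ℂ) * u^2)) := by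
    intro u
    rw [← Complex.exp_add, ← Complex.exp_add]
    congr 1
    have : ((4:ℂ)*t) ≠ 0 := by
      simp only [ne_eq, mul_eq_zero, OfNat.ofNat_ne_zero, false_or, ofReal_ne_zero]
      exact ht.ne'
    field_simp
    ring
  push_cast
  simp_rw [h1, integral_const_mul]
  rw [fourierIntegral_gaussian (by simp [ht]) (-ξ : ℂ)]
  have ht' : ((t:ℂ)) ≠ 0 := ofReal_ne_zero.mpr ht.ne'
  have h1' : ((Real.pi:ℂ) / (1 / (4 * (t:ℂ)))) = ((4*Real.pi*t : ℝ) : ℂ) := by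
    push_cast; field_simp
  have h2 : (((4*Real.pi*t : ℝ) : ℂ)) ^ (1/2 : ℂ) = ((Real.sqrt (4*Real.pi*t) : ℝ) : ℂ) := by
    rw [show (1/2 : ℂ) = ((1/2 : ℝ) : ℂ) by norm_num,
      ← Complex.ofReal_cpow (by positivity)]
    exact Complex.ofReal_inj.mpr (Real.sqrt_eq_rpow _).symm
  rw [h1', h2, mul_left_comm, ← Complex.exp_add]
  congr 2
  field_simp
  ring

lemma gaussnd {n : ℕ} {t : ℝ} (ht : 0 < t) (ξ x z : Fin n → ℝ) :
    ∫ y : Fin n → ℝ, cexp (I * ((∑ i, ξ i * (x i - y i) : ℝ) : ℂ)) *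
        ((Real.exp (-(∑ i, (y i - z i)^2) / (4*t)) : ℝ) : ℂ)
      = ((Real.sqrt (4*Real.pi*t) ^ n : ℝ) : ℂ) *
          (cexp (I * ((∑ i, ξ i * (x i - z i) : ℝ) : ℂ)) *
            ((Real.exp (-t * ∑ i, ξ i^2) : ℝ) : ℂ)) := by
  have key : ∀ y : Fin n → ℝ,
      cexp (I * ((∑ i, ξ i * (x i - y i) : ℝ) : ℂ)) *
        ((Real.exp (-(∑ i, (y i - z i)^2) / (4*t)) : ℝ) : ℂ)
      = ∏ i, (fun u : ℝ => cexp (I * (ξ i * (x i - u)) - (u - z i)^2 / (4*t))) (y i) := by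
    intro y
    rw [Complex.ofReal_exp, ← Complex.exp_add, ← Complex.exp_sum]
    congr 1
    push_cast
    rw [Finset.mul_sum, neg_div, Finset.sum_div, Finset.sum_sub_distrib]
    ring
  simp_rw [key]
  rw [MeasureTheory.integral_fintype_prod_volume_eq_prod (ι := Fin n)
    (fun i (u : ℝ) => cexp (I * (ξ i * (x i - u)) - (u - z i)^2 / (4*t)))]
  simp_rw [gauss1d ht]
  rw [Finset.prod_mul_distrib, Finset.prod_const, Finset.card_univ, Fintype.card_fin,
    ← Complex.exp_sum]
  push_cast
  rw [← Complex.exp_add]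
  congr 2
  simp only [mul_sub, Finset.sum_sub_distrib, Finset.sum_neg_distrib, neg_mul,
    Finset.mul_sum, mul_assoc]
  ring

lemma expIntegrable {n : ℕ} {s : ℝ} (hs : 0 < s) :
    Integrable (fun ξ : Fin n → ℝ => Real.exp (-s * ∑ i, ξ i ^ 2)) := by
  have : (fun ξ : Fin n → ℝ => Real.exp (-s * ∑ i, ξ i ^ 2))
      = fun ξ : Fin n → ℝ => ∏ i, (fun u : ℝ => Real.exp (-s * u ^ 2)) (ξ i) := by
    ext ξ
    rw [← Real.exp_sum]
    congr 1
    rw [Finset.mul_sum]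
  rw [this]
  exact Integrable.fintype_prod (fun i => integrable_exp_neg_mul_sq hs)

lemma expIntegral {n : ℕ} {s : ℝ} (hs : 0 < s) :
    ∫ ξ : Fin n → ℝ, Real.exp (-s * ∑ i, ξ i ^ 2) = Real.sqrt (Real.pi / s) ^ n := by
  have : (fun ξ : Fin n → ℝ => Real.exp (-s * ∑ i, ξ i ^ 2))
      = fun ξ : Fin n → ℝ => ∏ i, (fun u : ℝ => Real.exp (-s * u ^ 2)) (ξ i) := by
    ext ξ; rw [← Real.exp_sum]; congr 1; rw [Finset.mul_sum]
  rw [this, MeasureTheory.integral_fintype_prod_volume_eq_pow (ι := Fin n) (fun u : ℝ => Real.exp (-s * u ^ 2)),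
    integral_gaussian, Fintype.card_fin]

lemma sqrt_pow_eq_rpow {n : ℕ} {t : ℝ} (ht : 0 < t) :
    Real.sqrt (4 * Real.pi * t) ^ n = (4 * Real.pi * t) ^ ((n : ℝ) / 2) := by
  rw [Real.sqrt_eq_rpow, ← Real.rpow_natCast ((4 * Real.pi * t) ^ ((1:ℝ)/2)) n,
    ← Real.rpow_mul (by positivity)]
  congr 1
  ring

lemma sqrt_mul_sqrt {t : ℝ} (ht : 0 < t) :
    Real.sqrt (4 * Real.pi * t) * Real.sqrt (Real.pi / t) = 2 * Real.pi := by
  rw [← Real.sqrt_mul (by positivity)]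
  have : 4 * Real.pi * t * (Real.pi / t) = (2 * Real.pi) ^ 2 := by
    field_simp; ring
  rw [this, Real.sqrt_sq (by positivity)]

lemma continuous_theta {n : ℕ} (Θ : Matrix (Fin n) (Fin n) ℝ) :
    Continuous fun ξ : Fin n → ℝ => Θ.mulVec ξ := by
  have : (fun ξ : Fin n → ℝ => Θ.mulVec ξ) = ⇑Θ.mulVecLin := by
    ext ξ i; simp [Matrix.mulVecLin_apply]
  rw [this]
  exact Θ.mulVecLin.continuous_of_finiteDimensional

lemma norm_phase (s : ℝ) : ‖cexp (I * (s : ℂ))‖ = 1 := by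
  rw [Complex.norm_exp]
  simp

lemma kerIntegrable {n : ℕ} (Θ : Matrix (Fin n) (Fin n) ℝ)
    (f : SchwartzMap (Fin n → ℝ) ℂ) {t : ℝ} (ht : 0 < t) (x y : Fin n → ℝ) :
    Integrable (fun ξ : Fin n → ℝ =>
      cexp (I * ((∑ i, ξ i * (x i - y i) : ℝ) : ℂ)) *
        f (x - (1 / 2 : ℝ) • Θ.mulVec ξ) * ((Real.exp (-t * ∑ i, ξ i ^ 2) : ℝ) : ℂ)) := by
  obtain ⟨C, hCpos, hC⟩ := f.decay 0 0
  have hC' : ∀ v, ‖f v‖ ≤ C := by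
    intro v; simpa using hC v
  apply Integrable.mono' ((expIntegrable (n := n) ht).const_mul C)
  · apply Continuous.aestronglyMeasurable
    have hθ := continuous_theta Θ
    have hf := f.continuous
    fun_prop
  · filter_upwards with ξ
    simp only [norm_mul, Complex.norm_exp, Complex.norm_real, Real.norm_eq_abs]
    have h1 : (I * ((∑ i, ξ i * (x i - y i) : ℝ) : ℂ)).re = 0 := by simp
    rw [h1]
    simp only [Real.exp_zero, one_mul]
    rw [_root_.abs_of_nonneg (Real.exp_pos _).le]
    exact mul_le_mul_of_nonneg_right (hC' _) (Real.exp_pos _).le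

lemma prodInt1 {n : ℕ} (Θ : Matrix (Fin n) (Fin n) ℝ)
    (f : SchwartzMap (Fin n → ℝ) ℂ) {t : ℝ} (ht : 0 < t) :
    Integrable (fun p : (Fin n → ℝ) × (Fin n → ℝ) =>
      f (p.1 - (1 / 2 : ℝ) • Θ.mulVec p.2) * ((Real.exp (-t * ∑ i, p.2 i ^ 2) : ℝ) : ℂ))
      (volume.prod volume) := by
  have meas : AEStronglyMeasurable (fun p : (Fin n → ℝ) × (Fin n → ℝ) =>
      f (p.1 - (1 / 2 : ℝ) • Θ.mulVec p.2) * ((Real.exp (-t * ∑ i, p.2 i ^ 2) : ℝ) : ℂ))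
      (volume.prod volume) := by
    apply Continuous.aestronglyMeasurable
    have hθ := continuous_theta Θ
    have hf := f.continuous
    fun_prop
  rw [integrable_prod_iff' meas]
  constructor
  · filter_upwards with ξ
    exact (f.integrable.comp_sub_right _).mul_const _
  · have heq : (fun ξ : Fin n → ℝ => ∫ x : Fin n → ℝ,
        ‖f (x - (1 / 2 : ℝ) • Θ.mulVec ξ) * ((Real.exp (-t * ∑ i, ξ i ^ 2) : ℝ) : ℂ)‖)
        = fun ξ : Fin n → ℝ => (∫ v : Fin n → ℝ, ‖f v‖) * Real.exp (-t * ∑ i, ξ i ^ 2) := by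
      ext ξ
      simp only [norm_mul, Complex.norm_real, Real.norm_eq_abs,
        _root_.abs_of_nonneg (Real.exp_pos _).le]
      rw [integral_mul_const, integral_sub_right_eq_self (fun v => ‖f v‖)]
    rw [heq]
    exact (expIntegrable ht).const_mul _

lemma tracePart {n : ℕ} (Θ : Matrix (Fin n) (Fin n) ℝ)
    (f : SchwartzMap (Fin n → ℝ) ℂ) {t : ℝ} (ht : 0 < t) :
    ∫ x : Fin n → ℝ, moyalHeatKernel n Θ (fun z => f z) t x x
      = ((((4 * Real.pi * t) ^ ((n : ℝ) / 2))⁻¹ : ℝ) : ℂ) * ∫ x : Fin n → ℝ, f x := by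
  have hker : ∀ x : Fin n → ℝ, moyalHeatKernel n Θ (fun z => f z) t x x
      = (((2 * Real.pi) ^ n : ℝ) : ℂ)⁻¹ *
        ∫ ξ : Fin n → ℝ, f (x - (1 / 2 : ℝ) • Θ.mulVec ξ) *
          ((Real.exp (-t * ∑ i, ξ i ^ 2) : ℝ) : ℂ) := by
    intro x
    unfold moyalHeatKernel
    congr 1
    congr 1
    ext ξ
    simp [sub_self]
  simp_rw [hker]
  rw [integral_const_mul]
  rw [MeasureTheory.integral_integral_swap (prodInt1 Θ f ht)]
  have hinner : ∀ ξ : Fin n → ℝ,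
      (∫ x : Fin n → ℝ, f (x - (1 / 2 : ℝ) • Θ.mulVec ξ) * ((Real.exp (-t * ∑ i, ξ i ^ 2) : ℝ) : ℂ))
      = (∫ x : Fin n → ℝ, f x) * ((Real.exp (-t * ∑ i, ξ i ^ 2) : ℝ) : ℂ) := by
    intro ξ
    rw [integral_mul_const, integral_sub_right_eq_self (fun v => (f v : ℂ))]
  simp_rw [hinner]
  rw [integral_const_mul]
  have hcast : (∫ a : Fin n → ℝ, ((Real.exp (-t * ∑ i, a i ^ 2) : ℝ) : ℂ))
      = ((∫ a : Fin n → ℝ, Real.exp (-t * ∑ i, a i ^ 2) : ℝ) : ℂ) := integral_ofReal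
  rw [hcast, expIntegral ht]
  have hconst : (((2 * Real.pi) ^ n : ℝ))⁻¹ * Real.sqrt (Real.pi / t) ^ n
      = ((4 * Real.pi * t) ^ ((n : ℝ) / 2))⁻¹ := by
    rw [← sqrt_pow_eq_rpow ht]
    have h1 : Real.sqrt (4 * Real.pi * t) ^ n * Real.sqrt (Real.pi / t) ^ n
        = (2 * Real.pi) ^ n := by rw [← mul_pow, sqrt_mul_sqrt ht]
    have hb : (0:ℝ) < Real.sqrt (Real.pi / t) ^ n := by
      apply pow_pos (Real.sqrt_pos.mpr (by positivity))
    rw [← h1, mul_inv, mul_assoc, inv_mul_cancel₀ hb.ne', mul_one]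
  rw [← hconst]
  push_cast
  ring

lemma heatProdInt {n : ℕ} (ψ : SchwartzMap (Fin n → ℝ) ℂ) {t : ℝ} (ht : 0 < t) :
    Integrable (fun p : (Fin n → ℝ) × (Fin n → ℝ) =>
      ((((4 * Real.pi * t) ^ ((n : ℝ) / 2))⁻¹ : ℝ) : ℂ) *
        ((Real.exp (-(∑ i, (p.1 i - p.2 i) ^ 2) / (4 * t)) : ℝ) : ℂ) * ψ p.2)
      (volume.prod volume) := by
  have hGint : Integrable (fun w : Fin n → ℝ =>
      ((((4 * Real.pi * t) ^ ((n : ℝ) / 2))⁻¹ : ℝ) : ℂ) *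
        ((Real.exp (-(∑ i, w i ^ 2) / (4 * t)) : ℝ) : ℂ)) := by
    apply Integrable.const_mul
    have h := (expIntegrable (n := n) (s := 1/(4*t)) (by positivity)).ofReal (𝕜 := ℂ)
    have he : ∀ w : Fin n → ℝ, (-(∑ i, w i ^ 2) / (4*t)) = -(1/(4*t)) * ∑ i, w i ^ 2 :=
      fun w => by ring
    simp_rw [he]
    exact h
  have key := (ψ.integrable (μ := volume)).convolution_integrand
    (ContinuousLinearMap.mul ℝ ℂ) hGint
  have : (fun p : (Fin n → ℝ) × (Fin n → ℝ) =>
      ((((4 * Real.pi * t) ^ ((n : ℝ) / 2))⁻¹ : ℝ) : ℂ) *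
        ((Real.exp (-(∑ i, (p.1 i - p.2 i) ^ 2) / (4 * t)) : ℝ) : ℂ) * ψ p.2)
      = (fun p : (Fin n → ℝ) × (Fin n → ℝ) =>
        (ContinuousLinearMap.mul ℝ ℂ) (ψ p.2)
          (((((4 * Real.pi * t) ^ ((n : ℝ) / 2))⁻¹ : ℝ) : ℂ) *
            ((Real.exp (-(∑ i, (p.1 - p.2) i ^ 2) / (4 * t)) : ℝ) : ℂ))) := by
    ext p
    simp only [ContinuousLinearMap.mul_apply', Pi.sub_apply]
    ring
  rw [this]
  exact key

lemma kernelPart {n : ℕ} (Θ : Matrix (Fin n) (Fin n) ℝ)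
    (f ψ : SchwartzMap (Fin n → ℝ) ℂ) {t : ℝ} (ht : 0 < t) (x : Fin n → ℝ) :
    moyal n Θ (fun y => f y) (flatHeat n t (fun y => ψ y)) x
      = ∫ y : Fin n → ℝ, moyalHeatKernel n Θ (fun z => f z) t x y * ψ y := by
  obtain ⟨C, hCpos, hC⟩ := f.decay 0 0
  have hC' : ∀ v, ‖f v‖ ≤ C := by intro v; simpa using hC v
  have hθ := continuous_theta Θ
  have hfc := f.continuous
  have hψc := ψ.continuous
  have hKt1 : ((((4 * Real.pi * t) ^ ((n : ℝ) / 2))⁻¹ : ℝ) : ℂ) *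
      ((Real.sqrt (4 * Real.pi * t) ^ n : ℝ) : ℂ) = 1 := by
    rw [sqrt_pow_eq_rpow ht, ← Complex.ofReal_mul,
      inv_mul_cancel₀ (ne_of_gt (Real.rpow_pos_of_pos (by positivity) _)),
      Complex.ofReal_one]
  -- Step A : evaluate the inner y-integral for fixed ξ
  have stepA : ∀ ξ : Fin n → ℝ,
      (∫ y : Fin n → ℝ, cexp (I * ((∑ i, ξ i * (x i - y i) : ℝ) : ℂ)) *
          f (x - (1 / 2 : ℝ) • Θ.mulVec ξ) * flatHeat n t (fun y => ψ y) y)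
      = ∫ z : Fin n → ℝ, cexp (I * ((∑ i, ξ i * (x i - z i) : ℝ) : ℂ)) *
          f (x - (1 / 2 : ℝ) • Θ.mulVec ξ) *
          ((Real.exp (-t * ∑ i, ξ i ^ 2) : ℝ) : ℂ) * ψ z := by
    intro ξ
    set c : ℂ := f (x - (1 / 2 : ℝ) • Θ.mulVec ξ) with hc
    -- swap integrability for (y,z)
    have hswap1 : Integrable (Function.uncurry fun y z : Fin n → ℝ =>
        cexp (I * ((∑ i, ξ i * (x i - y i) : ℝ) : ℂ)) *
          (((((4 * Real.pi * t) ^ ((n : ℝ) / 2))⁻¹ : ℝ) : ℂ) *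
            ((Real.exp (-(∑ i, (y i - z i) ^ 2) / (4 * t)) : ℝ) : ℂ) * ψ z))
        (volume.prod volume) := by
      apply Integrable.mono' (heatProdInt ψ ht).norm
      · apply Continuous.aestronglyMeasurable
        fun_prop
      · filter_upwards with p
        rw [Function.uncurry]
        rw [norm_mul, norm_phase, one_mul]
    have h1 : ∀ y : Fin n → ℝ,
        cexp (I * ((∑ i, ξ i * (x i - y i) : ℝ) : ℂ)) * c * flatHeat n t (fun y => ψ y) y
        = c * ∫ z : Fin n → ℝ, cexp (I * ((∑ i, ξ i * (x i - y i) : ℝ) : ℂ)) *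
            (((((4 * Real.pi * t) ^ ((n : ℝ) / 2))⁻¹ : ℝ) : ℂ) *
              ((Real.exp (-(∑ i, (y i - z i) ^ 2) / (4 * t)) : ℝ) : ℂ) * ψ z) := by
      intro y
      have : flatHeat n t (fun y => ψ y) y = ∫ z : Fin n → ℝ,
          ((((4 * Real.pi * t) ^ ((n : ℝ) / 2))⁻¹ : ℝ) : ℂ) *
            ((Real.exp (-(∑ i, (y i - z i) ^ 2) / (4 * t)) : ℝ) : ℂ) * ψ z := rfl
      rw [this]
      rw [show (∫ z : Fin n → ℝ, cexp (I * ((∑ i, ξ i * (x i - y i) : ℝ) : ℂ)) *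
            (((((4 * Real.pi * t) ^ ((n : ℝ) / 2))⁻¹ : ℝ) : ℂ) *
              ((Real.exp (-(∑ i, (y i - z i) ^ 2) / (4 * t)) : ℝ) : ℂ) * ψ z))
          = cexp (I * ((∑ i, ξ i * (x i - y i) : ℝ) : ℂ)) *
            ∫ z : Fin n → ℝ, ((((4 * Real.pi * t) ^ ((n : ℝ) / 2))⁻¹ : ℝ) : ℂ) *
              ((Real.exp (-(∑ i, (y i - z i) ^ 2) / (4 * t)) : ℝ) : ℂ) * ψ z
          from integral_const_mul _ _]
      ring
    simp_rw [h1]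
    rw [integral_const_mul, MeasureTheory.integral_integral_swap hswap1]
    have h2 : ∀ z : Fin n → ℝ,
        (∫ y : Fin n → ℝ, cexp (I * ((∑ i, ξ i * (x i - y i) : ℝ) : ℂ)) *
          (((((4 * Real.pi * t) ^ ((n : ℝ) / 2))⁻¹ : ℝ) : ℂ) *
            ((Real.exp (-(∑ i, (y i - z i) ^ 2) / (4 * t)) : ℝ) : ℂ) * ψ z))
        = (((((4 * Real.pi * t) ^ ((n : ℝ) / 2))⁻¹ : ℝ) : ℂ) * ψ z) *
            ∫ y : Fin n → ℝ, cexp (I * ((∑ i, ξ i * (x i - y i) : ℝ) : ℂ)) *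
              ((Real.exp (-(∑ i, (y i - z i) ^ 2) / (4 * t)) : ℝ) : ℂ) := by
      intro z
      rw [← integral_const_mul]
      congr 1
      ext y
      ring
    simp_rw [h2, gaussnd ht ξ x]
    rw [← integral_const_mul]
    congr 1
    ext z
    trans ((((((4 * Real.pi * t) ^ ((n : ℝ) / 2))⁻¹ : ℝ) : ℂ) *
        ((Real.sqrt (4 * Real.pi * t) ^ n : ℝ) : ℂ)) *
          (cexp (I * ((∑ i, ξ i * (x i - z i) : ℝ) : ℂ)) * c *
            ((Real.exp (-t * ∑ i, ξ i ^ 2) : ℝ) : ℂ) * ψ z))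
    · ring
    · rw [hKt1, one_mul]
  have prodInt2 : Integrable (Function.uncurry fun ξ z : Fin n → ℝ =>
      cexp (I * ((∑ i, ξ i * (x i - z i) : ℝ) : ℂ)) * f (x - (1 / 2 : ℝ) • Θ.mulVec ξ) *
        ((Real.exp (-t * ∑ i, ξ i ^ 2) : ℝ) : ℂ) * ψ z) (volume.prod volume) := by
    apply Integrable.mono'
      (g := fun p : (Fin n → ℝ) × (Fin n → ℝ) =>
        C * Real.exp (-t * ∑ i, p.1 i ^ 2) * ‖ψ p.2‖)
      (Integrable.mul_prod ((expIntegrable ht).const_mul C) ψ.integrable.norm)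
    · apply Continuous.aestronglyMeasurable
      fun_prop
    · filter_upwards with p
      rw [Function.uncurry]
      simp only [norm_mul, norm_phase, one_mul, Complex.norm_real, Real.norm_eq_abs,
        _root_.abs_of_nonneg (Real.exp_pos _).le]
      gcongr
      exact hC' _
  simp only [moyal, moyalHeatKernel]
  simp_rw [stepA]
  rw [integral_integral_swap prodInt2]
  simp_rw [integral_mul_const]
  rw [← integral_const_mul]
  congr 1
  ext z
  ring


/-- For `f ∈ S(ℝⁿ)` and `t > 0`, the operator `L^Θ(f) e^{tΔ}` is trace class
(its Schwartz kernel has integrable diagonal) and its trace is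
`(4πt)^{-n/2} ∫ f`. -/
theorem trace_moyal_heat (n : ℕ) (Θ : Matrix (Fin n) (Fin n) ℝ)
    (hΘ : Θ.transpose = -Θ) (f : SchwartzMap (Fin n → ℝ) ℂ) (t : ℝ) (ht : 0 < t) :
    (∀ ψ : SchwartzMap (Fin n → ℝ) ℂ, ∀ x : Fin n → ℝ,
        moyal n Θ (fun y => f y) (flatHeat n t (fun y => ψ y)) x
          = ∫ y : Fin n → ℝ, moyalHeatKernel n Θ (fun z => f z) t x y * ψ y)
      ∧ Integrable (fun x : Fin n → ℝ => moyalHeatKernel n Θ (fun z => f z) t x x)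
      ∧ ∫ x : Fin n → ℝ, moyalHeatKernel n Θ (fun z => f z) t x x
          = ((((4 * Real.pi * t) ^ ((n : ℝ) / 2))⁻¹ : ℝ) : ℂ) *
              ∫ x : Fin n → ℝ, f x := by
  refine ⟨fun ψ x => kernelPart Θ f ψ ht x, ?_, tracePart Θ f ht⟩
  have hker : (fun x : Fin n → ℝ => moyalHeatKernel n Θ (fun z => f z) t x x)
      = fun x : Fin n → ℝ => (((2 * Real.pi) ^ n : ℝ) : ℂ)⁻¹ *
        ∫ ξ : Fin n → ℝ, f (x - (1 / 2 : ℝ) • Θ.mulVec ξ) *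
          ((Real.exp (-t * ∑ i, ξ i ^ 2) : ℝ) : ℂ) := by
    ext x
    unfold moyalHeatKernel
    congr 1
    congr 1
    ext ξ
    simp [sub_self]
  rw [hker]
  exact ((prodInt1 Θ f ht).integral_prod_left).const_mul _
end
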